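/- Let ρ be a two-qubit density matrix, i.e. a Hermitian positive-semidefinite matrix of trace 1 indexed by (Fin 2 → Fin 2). Let R be the real 3×3 matrix with entries R(i, j) = Re Tr(ρ · σ_i⊗σ_j) for i, j ∈ {1,2,3}, and let u₁² ≥ u₂² ≥ u₃² denote the three eigenvalues of RᵀR. Then 2√(u₁² + u₂²) is the maximum of the set { Re Tr(ρ · B₂) : B₂ a two-qubit Bell operator }, i.e. every Bell operator satisfies Re Tr(ρ · B₂) ≤ 2√(u₁² + u₂²) and some Bell operator attains this value. -/

import Mathlib

open Matrix Complex Polynomial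
open scoped ComplexOrder

noncomputable section

/-- The three Pauli matrices σ_x, σ_y, σ_z. -/
def pauli : Fin 3 → Matrix (Fin 2) (Fin 2) ℂ :=
  ![!![0, 1; 1, 0], !![0, -Complex.I; Complex.I, 0], !![1, 0; 0, -1]]

/-- Kronecker product of `n` 2×2 matrices, as a matrix on `(Fin n → Fin 2)`. -/
def kron {n : ℕ} (M : Fin n → Matrix (Fin 2) (Fin 2) ℂ) :
    Matrix (Fin n → Fin 2) (Fin n → Fin 2) ℂ :=
  Matrix.of fun f g => ∏ k, M k (f k) (g k)

/-- The operator a¹σ_x + a²σ_y + a³σ_z associated to a vector a ∈ ℝ³. -/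
def opOf (a : Fin 3 → ℝ) : Matrix (Fin 2) (Fin 2) ℂ :=
  ∑ i, (a i : ℂ) • pauli i

/-- `B` is an `n`-qubit Bell operator:
`B = A₁⊗⋯⊗A_{n-1}⊗(A_n + A_n′) + A₁′⊗⋯⊗A_{n-1}′⊗(A_n − A_n′)`
for unit vectors `a k`, `a' k` in ℝ³. -/
def IsBellOp (n : ℕ) (B : Matrix (Fin n → Fin 2) (Fin n → Fin 2) ℂ) : Prop :=
  ∃ a a' : Fin n → Fin 3 → ℝ,
    (∀ k, ∑ i, (a k i) ^ 2 = 1) ∧ (∀ k, ∑ i, (a' k i) ^ 2 = 1) ∧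
    B = kron (fun k => if (k : ℕ) = n - 1 then opOf (a k) + opOf (a' k) else opOf (a k))
      + kron (fun k => if (k : ℕ) = n - 1 then opOf (a k) - opOf (a' k) else opOf (a' k))

/-- The generalized R-matrix of an `n`-qubit density matrix:
`R(I, j) = Re Tr(ρ · σ_{i₁}⊗⋯⊗σ_{i_{n-1}}⊗σ_j)`. -/
def Rmat {n : ℕ} (ρ : Matrix (Fin n → Fin 2) (Fin n → Fin 2) ℂ)
    (I : Fin (n - 1) → Fin 3) (j : Fin 3) : ℝ :=
  (Matrix.trace (ρ * kron fun k =>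
    if h : (k : ℕ) < n - 1 then pauli (I ⟨k, h⟩) else pauli j)).re

/-- The 3×3 matrix `RᵀR` built from the generalized R-matrix. -/
def RtR {n : ℕ} (ρ : Matrix (Fin n → Fin 2) (Fin n → Fin 2) ℂ) :
    Matrix (Fin 3) (Fin 3) ℝ :=
  Matrix.of fun j j' => ∑ I : Fin (n - 1) → Fin 3, Rmat ρ I j * Rmat ρ I j'

/-! ### Auxiliary lemmas -/

section CharpolyAux

lemma charpoly_diag {n : Type*} [Fintype n] [DecidableEq n] (d : n → ℝ) :
    (Matrix.diagonal d).charpoly = ∏ i, (X - C (d i)) := by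
  have h : charmatrix (Matrix.diagonal d) = Matrix.diagonal (fun i => (X : ℝ[X]) - C (d i)) := by
    ext i j
    by_cases hij : i = j
    · subst hij; simp [charmatrix_apply_eq]
    · simp [charmatrix_apply_ne _ _ _ hij, Matrix.diagonal_apply_ne _ hij]
  rw [Matrix.charpoly, h, Matrix.det_diagonal]

lemma charpoly_conj_unitary {n : Type*} [Fintype n] [DecidableEq n]
    (U : Matrix.unitaryGroup n ℝ) (D : Matrix n n ℝ) :
    ((U : Matrix n n ℝ) * D * star (U : Matrix n n ℝ)).charpoly = D.charpoly := by
  have hmul : ∀ M N : Matrix n n ℝ, (M * N).map (C : ℝ →+* ℝ[X]) = M.map C * N.map C := by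
    intro M N; exact Matrix.map_mul
  have hone : (1 : Matrix n n ℝ).map (⇑(C : ℝ →+* ℝ[X])) = 1 :=
    Matrix.map_one _ (map_zero C) (map_one C)
  have hU : (U : Matrix n n ℝ) * star (U : Matrix n n ℝ) = 1 := U.2.2
  have hU' : star (U : Matrix n n ℝ) * (U : Matrix n n ℝ) = 1 := U.2.1
  have key : charmatrix ((U : Matrix n n ℝ) * D * star (U : Matrix n n ℝ))
      = (U : Matrix n n ℝ).map C * charmatrix D * (star (U : Matrix n n ℝ)).map C := by
    rw [charmatrix, charmatrix, Matrix.mul_sub, Matrix.sub_mul]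
    congr 1
    · calc (Matrix.scalar n) (X : ℝ[X])
          = (Matrix.scalar n) (X : ℝ[X]) *
            ((U : Matrix n n ℝ).map C * (star (U : Matrix n n ℝ)).map C) := by
            rw [← hmul, hU, hone, mul_one]
        _ = (U : Matrix n n ℝ).map C * (Matrix.scalar n) (X : ℝ[X]) *
            (star (U : Matrix n n ℝ)).map C := by
            rw [← mul_assoc, (Matrix.scalar_commute (X : ℝ[X]) (fun r => Commute.all _ _) _).eq]
    · rw [RingHom.mapMatrix_apply, RingHom.mapMatrix_apply, hmul, hmul]
  rw [Matrix.charpoly, key, Matrix.det_mul, Matrix.det_mul, mul_comm, ← mul_assoc,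
    ← Matrix.det_mul, ← hmul, hU', hone, Matrix.det_one, one_mul, Matrix.charpoly]

lemma charpoly_herm {n : Type*} [Fintype n] [DecidableEq n] {S : Matrix n n ℝ}
    (hS : S.IsHermitian) : S.charpoly = ∏ i, (X - C (hS.eigenvalues i)) := by
  have h := hS.spectral_theorem
  rw [congrArg Matrix.charpoly h, Unitary.conjStarAlgAut_apply, charpoly_conj_unitary]
  have : (RCLike.ofReal ∘ hS.eigenvalues : n → ℝ) = hS.eigenvalues := by
    funext i; simp [RCLike.ofReal]
  rw [this, charpoly_diag]

lemma multiset_of_prod_eq (f : Fin 3 → ℝ) (a b c : ℝ)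
    (h : ∏ i, (X - C (f i)) = (X - C a) * (X - C b) * (X - C c)) :
    Multiset.map f Finset.univ.val = {a, b, c} := by
  have h1 : (∏ i, (X - C (f i)) : ℝ[X]) =
      ((Multiset.map f Finset.univ.val).map fun t => X - C t).prod := by
    rw [Multiset.map_map]
    rfl
  have h2 : ((X - C a) * (X - C b) * (X - C c) : ℝ[X]) =
      (({a, b, c} : Multiset ℝ).map fun t => X - C t).prod := by
    simp [Multiset.insert_eq_cons, mul_assoc]
  have := congrArg Polynomial.roots (h1.symm.trans (h.trans h2))
  rwa [Polynomial.roots_multiset_prod_X_sub_C, Polynomial.roots_multiset_prod_X_sub_C] at this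

lemma cons_of_mem {α : Type*} [DecidableEq α] (s : Finset α) {p : α} (hp : p ∈ s) :
    s.val = p ::ₘ (s.erase p).val := by
  conv_lhs => rw [← Finset.insert_erase hp]
  rw [Finset.insert_val_of_notMem (Finset.notMem_erase p s)]

lemma exists_triple (f : Fin 3 → ℝ) (a b c : ℝ)
    (h : Multiset.map f Finset.univ.val = {a, b, c}) :
    ∃ p q s : Fin 3, p ≠ q ∧ p ≠ s ∧ q ≠ s ∧ f p = a ∧ f q = b ∧ f s = c := by
  have hbc : ({a, b, c} : Multiset ℝ) = a ::ₘ b ::ₘ {c} := rfl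
  have ha : a ∈ Multiset.map f Finset.univ.val := by rw [h]; simp
  obtain ⟨p, hpmem, hp⟩ := Multiset.mem_map.1 ha
  rw [cons_of_mem _ (Finset.mem_univ p), Multiset.map_cons, hp, hbc] at h
  have h2 := (Multiset.cons_inj_right _).1 h
  have hb : b ∈ Multiset.map f (Finset.univ.erase p).val := by rw [h2]; simp
  obtain ⟨q, hqmem, hq⟩ := Multiset.mem_map.1 hb
  rw [Finset.mem_val] at hqmem
  rw [cons_of_mem _ hqmem, Multiset.map_cons, hq] at h2
  have h3 := (Multiset.cons_inj_right _).1 h2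
  have hc : c ∈ Multiset.map f ((Finset.univ.erase p).erase q).val := by rw [h3]; simp
  obtain ⟨s, hsmem, hs⟩ := Multiset.mem_map.1 hc
  rw [Finset.mem_val] at hsmem
  have hqp : q ≠ p := Finset.ne_of_mem_erase hqmem
  have hsq : s ≠ q := Finset.ne_of_mem_erase hsmem
  have hsp : s ≠ p := Finset.ne_of_mem_erase (Finset.mem_of_mem_erase hsmem)
  exact ⟨p, q, s, hqp.symm, hsp.symm, hsq.symm, hp, hq, hs⟩

end CharpolyAux

section DotAux

variable {m : Type*} [Fintype m]

lemma bessel_dot (v x y : m → ℝ) (hv : v ⬝ᵥ v = 1) (hx : x ⬝ᵥ x = 1) (hy : y ⬝ᵥ y = 1)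
    (hxy : x ⬝ᵥ y = 0) : (v ⬝ᵥ x) ^ 2 + (v ⬝ᵥ y) ^ 2 ≤ 1 := by
  set z : m → ℝ := v - (v ⬝ᵥ x) • x - (v ⬝ᵥ y) • y with hzdef
  have hz : 0 ≤ z ⬝ᵥ z := Finset.sum_nonneg fun i _ => mul_self_nonneg _
  have h1 : x ⬝ᵥ v = v ⬝ᵥ x := dotProduct_comm _ _
  have h2 : y ⬝ᵥ v = v ⬝ᵥ y := dotProduct_comm _ _
  have h3 : y ⬝ᵥ x = x ⬝ᵥ y := dotProduct_comm _ _
  simp only [hzdef, dotProduct_sub, sub_dotProduct, dotProduct_smul, smul_dotProduct,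
    smul_eq_mul, h1, h2, h3, hv, hx, hy, hxy] at hz
  nlinarith [hz]

lemma cs_pair (α β p q : ℝ) (hα : 0 ≤ α) (hβ : 0 ≤ β) (hp : 0 ≤ p) (hq : 0 ≤ q) :
    α * p + β * q ≤ Real.sqrt (α ^ 2 + β ^ 2) * Real.sqrt (p ^ 2 + q ^ 2) := by
  have h2 : (α * p + β * q) ^ 2 ≤ (α ^ 2 + β ^ 2) * (p ^ 2 + q ^ 2) := by
    nlinarith [sq_nonneg (α * q - β * p)]
  have h3 : α * p + β * q = Real.sqrt ((α * p + β * q) ^ 2) :=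
    (Real.sqrt_sq (by positivity)).symm
  rw [h3, ← Real.sqrt_mul (by positivity)]
  exact Real.sqrt_le_sqrt h2

lemma cs_dot (u w : m → ℝ) (hu : u ⬝ᵥ u = 1) : u ⬝ᵥ w ≤ Real.sqrt (w ⬝ᵥ w) := by
  have h := Real.sum_mul_le_sqrt_mul_sqrt Finset.univ u w
  have hu' : ∑ i, u i ^ 2 = 1 := by
    rw [Finset.sum_congr rfl fun i _ => pow_two (u i)]; exact hu
  have hw' : ∑ i, w i ^ 2 = w ⬝ᵥ w := by
    rw [Finset.sum_congr rfl fun i _ => pow_two (w i)]; rfl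
  rw [hu', hw'] at h
  simpa [dotProduct] using h

lemma dot_self_nonneg' (w : m → ℝ) : 0 ≤ w ⬝ᵥ w := Finset.sum_nonneg fun i _ => mul_self_nonneg _

lemma eq_zero_of_dot_self_eq_zero {w : m → ℝ} (h : w ⬝ᵥ w = 0) : w = 0 := by
  funext i
  exact mul_self_eq_zero.1
    (Finset.sum_eq_zero_iff_of_nonneg (fun j _ => mul_self_nonneg (w j)) |>.1 h i
      (Finset.mem_univ i))

lemma sq_sum_eq_dot (x : m → ℝ) : ∑ i, x i ^ 2 = x ⬝ᵥ x := by
  rw [Finset.sum_congr rfl fun i _ => pow_two (x i)]; rfl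

lemma smul_dot_smul (t u : ℝ) (x y : m → ℝ) : (t • x) ⬝ᵥ (u • y) = (t * u) * (x ⬝ᵥ y) := by
  rw [smul_dotProduct, dotProduct_smul, smul_eq_mul, smul_eq_mul]; ring

lemma inner_eq_dot (x y : EuclideanSpace ℝ m) : (inner ℝ x y : ℝ) = (⇑x) ⬝ᵥ (⇑y) := by
  simp [PiLp.inner_apply, dotProduct, RCLike.inner_apply, mul_comm]

lemma dot_sum {ι : Type*} (s : Finset ι) (x : m → ℝ) (w : ι → m → ℝ) :
    x ⬝ᵥ (∑ i ∈ s, w i) = ∑ i ∈ s, x ⬝ᵥ (w i) := by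
  simp only [dotProduct, Finset.sum_apply, Finset.mul_sum]
  exact Finset.sum_comm

variable [DecidableEq m] {S : Matrix m m ℝ} (hS : S.IsHermitian)

lemma vb_dot (i j : m) :
    (⇑(hS.eigenvectorBasis i) : m → ℝ) ⬝ᵥ ⇑(hS.eigenvectorBasis j) = if i = j then 1 else 0 := by
  rw [← inner_eq_dot]
  exact orthonormal_iff_ite.1 hS.eigenvectorBasis.orthonormal i j

lemma sum_repr_dot (x : m → ℝ) :
    ∑ i, ((⇑(hS.eigenvectorBasis i) : m → ℝ) ⬝ᵥ x) • (⇑(hS.eigenvectorBasis i) : m → ℝ) = x := by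
  have h := congrArg WithLp.ofLp (hS.eigenvectorBasis.sum_repr' (WithLp.toLp 2 x))
  simp only [inner_eq_dot, WithLp.ofLp_sum, WithLp.ofLp_smul, WithLp.ofLp_toLp] at h
  exact h

lemma mulVec_expand (x : m → ℝ) :
    S *ᵥ x = ∑ i, (hS.eigenvalues i * ((⇑(hS.eigenvectorBasis i) : m → ℝ) ⬝ᵥ x)) •
      (⇑(hS.eigenvectorBasis i) : m → ℝ) := by
  conv_lhs => rw [← sum_repr_dot hS x]
  rw [show S *ᵥ (∑ i, ((⇑(hS.eigenvectorBasis i) : m → ℝ) ⬝ᵥ x) •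
        (⇑(hS.eigenvectorBasis i) : m → ℝ))
      = ∑ i, ((⇑(hS.eigenvectorBasis i) : m → ℝ) ⬝ᵥ x) • (S *ᵥ ⇑(hS.eigenvectorBasis i)) from by
    rw [← Matrix.mulVecLin_apply, map_sum]
    simp [Matrix.mulVecLin_apply, Matrix.mulVec_smul]]
  refine Finset.sum_congr rfl fun i _ => ?_
  rw [hS.mulVec_eigenvectorBasis i, smul_smul, mul_comm]

lemma quadform_eq (x : m → ℝ) :
    x ⬝ᵥ (S *ᵥ x) = ∑ i, hS.eigenvalues i * ((⇑(hS.eigenvectorBasis i) : m → ℝ) ⬝ᵥ x) ^ 2 := by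
  rw [mulVec_expand hS x, dot_sum]
  refine Finset.sum_congr rfl fun i _ => ?_
  rw [dotProduct_smul]
  rw [dotProduct_comm x]
  ring_nf

lemma parseval_dot (x : m → ℝ) :
    x ⬝ᵥ x = ∑ i, ((⇑(hS.eigenvectorBasis i) : m → ℝ) ⬝ᵥ x) ^ 2 := by
  rw [congrArg (fun w => x ⬝ᵥ w) (sum_repr_dot hS x).symm, dot_sum]
  refine Finset.sum_congr rfl fun i _ => ?_
  rw [dotProduct_smul, dotProduct_comm x, smul_eq_mul]
  ring

end DotAux

section RhoAux

variable (ρ : Matrix (Fin 2 → Fin 2) (Fin 2 → Fin 2) ℂ)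

/-- The 3×3 real matrix `R(i,j) = Re Tr(ρ · σ_i ⊗ σ_j)`. -/
def Rm : Matrix (Fin 3) (Fin 3) ℝ :=
  Matrix.of fun i j => (Matrix.trace (ρ * kron ![pauli i, pauli j])).re

lemma Rmat_eq (I : Fin (2 - 1) → Fin 3) (j : Fin 3) : Rmat ρ I j = Rm ρ (I 0) j := by
  have h : (fun k : Fin 2 => if h : (k : ℕ) < 2 - 1 then pauli (I ⟨k, h⟩) else pauli j)
      = ![pauli (I 0), pauli j] := by
    funext k
    fin_cases k <;> simp
  unfold Rmat Rm
  rw [h]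
  rfl

lemma RtR_eq : RtR ρ = (Rm ρ)ᵀ * Rm ρ := by
  ext j j'
  show ∑ I : Fin 1 → Fin 3, Rmat ρ I j * Rmat ρ I j' = _
  rw [Fintype.sum_equiv (Equiv.funUnique (Fin 1) (Fin 3))
    _ (fun i => Rm ρ i j * Rm ρ i j') (fun I => by rw [Rmat_eq, Rmat_eq]; rfl)]
  simp [Matrix.mul_apply, Matrix.transpose_apply, mul_comm]

lemma kron_two (A B : Matrix (Fin 2) (Fin 2) ℂ) (f g : Fin 2 → Fin 2) :
    kron ![A, B] f g = A (f 0) (g 0) * B (f 1) (g 1) := by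
  simp [kron, Fin.prod_univ_two]

lemma trace_kron_opOf (x y : Fin 3 → ℝ) :
    (Matrix.trace (ρ * kron ![opOf x, opOf y])).re = x ⬝ᵥ (Rm ρ *ᵥ y) := by
  have hK : kron ![opOf x, opOf y]
      = ∑ i, ∑ j, (((x i * y j : ℝ)) : ℂ) • kron ![pauli i, pauli j] := by
    ext f g
    rw [kron_two]
    simp only [opOf, Matrix.sum_apply, Matrix.smul_apply, smul_eq_mul]
    rw [Finset.sum_mul_sum]
    refine Finset.sum_congr rfl fun i _ => Finset.sum_congr rfl fun j _ => ?_
    rw [kron_two]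
    push_cast
    ring
  rw [hK]
  rw [Matrix.mul_sum]
  rw [Matrix.trace_sum]
  have : ∀ i : Fin 3,
      (Matrix.trace (ρ * ∑ j, ((((x i * y j : ℝ)) : ℂ) • kron ![pauli i, pauli j]))).re
      = ∑ j, x i * y j * Rm ρ i j := by
    intro i
    rw [Matrix.mul_sum, Matrix.trace_sum, Complex.re_sum]
    refine Finset.sum_congr rfl fun j _ => ?_
    rw [Matrix.mul_smul, Matrix.trace_smul, smul_eq_mul, Complex.re_ofReal_mul]
    rfl
  rw [Complex.re_sum, Finset.sum_congr rfl fun i _ => this i]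
  simp only [dotProduct, Matrix.mulVec, Finset.mul_sum]
  refine Finset.sum_congr rfl fun i _ => Finset.sum_congr rfl fun j _ => ?_
  show x i * y j * Rm ρ i j = x i * (Rm ρ i j * y j)
  ring

lemma opOf_add (x y : Fin 3 → ℝ) : opOf x + opOf y = opOf (fun i => x i + y i) := by
  unfold opOf
  rw [← Finset.sum_add_distrib]
  refine Finset.sum_congr rfl fun i _ => ?_
  rw [← add_smul]
  push_cast
  rfl

lemma opOf_sub (x y : Fin 3 → ℝ) : opOf x - opOf y = opOf (fun i => x i - y i) := by
  unfold opOf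
  rw [← Finset.sum_sub_distrib]
  refine Finset.sum_congr rfl fun i _ => ?_
  rw [← sub_smul]
  push_cast
  rfl

lemma bell_value (a a' : Fin 2 → Fin 3 → ℝ) :
    (Matrix.trace (ρ *
      (kron (fun k => if (k : ℕ) = 2 - 1 then opOf (a k) + opOf (a' k) else opOf (a k))
      + kron (fun k => if (k : ℕ) = 2 - 1 then opOf (a k) - opOf (a' k) else opOf (a' k))))).re
    = (a 0) ⬝ᵥ (Rm ρ *ᵥ (fun j => a 1 j + a' 1 j))
      + (a' 0) ⬝ᵥ (Rm ρ *ᵥ (fun j => a 1 j - a' 1 j)) := by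
  have h1 : (fun k : Fin 2 => if (k : ℕ) = 2 - 1 then opOf (a k) + opOf (a' k) else opOf (a k))
      = ![opOf (a 0), opOf (fun j => a 1 j + a' 1 j)] := by
    funext k
    fin_cases k
    · simp
    · simp [opOf_add]
  have h2 : (fun k : Fin 2 => if (k : ℕ) = 2 - 1 then opOf (a k) - opOf (a' k) else opOf (a' k))
      = ![opOf (a' 0), opOf (fun j => a 1 j - a' 1 j)] := by
    funext k
    fin_cases k
    · simp
    · simp [opOf_sub]
  rw [h1, h2, Matrix.mul_add, Matrix.trace_add, Complex.add_re, trace_kron_opOf, trace_kron_opOf]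

end RhoAux

/-- For a two-qubit density matrix `ρ`, `2√(u₁² + u₂²)` (with `u₁² ≥ u₂² ≥ u₃²` the
eigenvalues of `RᵀR`) is the maximum of `Re Tr(ρ·B₂)` over two-qubit Bell operators. -/
theorem two_qubit_bell_max
    (ρ : Matrix (Fin 2 → Fin 2) (Fin 2 → Fin 2) ℂ)
    (hρ : ρ.PosSemidef) (htr : Matrix.trace ρ = 1)
    (u₁sq u₂sq u₃sq : ℝ) (h12 : u₂sq ≤ u₁sq) (h23 : u₃sq ≤ u₂sq)
    (hchar : (RtR ρ).charpoly =
      (X - C u₁sq) * (X - C u₂sq) * (X - C u₃sq)) :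
    IsGreatest {x : ℝ | ∃ B, IsBellOp 2 B ∧ x = (Matrix.trace (ρ * B)).re}
      (2 * Real.sqrt (u₁sq + u₂sq)) := by
  have hSsym : (RtR ρ).IsHermitian := by
    rw [Matrix.IsHermitian]
    ext j j'
    show star (RtR ρ j' j) = RtR ρ j j'
    rw [star_trivial]
    show (∑ I : Fin 1 → Fin 3, Rmat ρ I j' * Rmat ρ I j)
      = ∑ I : Fin 1 → Fin 3, Rmat ρ I j * Rmat ρ I j'
    exact Finset.sum_congr rfl fun I _ => mul_comm _ _
  set S := RtR ρ with hSdef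
  set ev : Fin 3 → ℝ := hSsym.eigenvalues with hevdef
  set v : Fin 3 → (Fin 3 → ℝ) := fun i => ⇑(hSsym.eigenvectorBasis i) with hvdef
  obtain ⟨p, q, s, hpq, hps, hqs, hp, hq, hs⟩ :=
    exists_triple ev u₁sq u₂sq u₃sq
      (multiset_of_prod_eq _ _ _ _ ((charpoly_herm hSsym).symm.trans hchar))
  have huniv : ({p, q, s} : Finset (Fin 3)) = Finset.univ := by
    apply Finset.eq_univ_of_card
    rw [Finset.card_insert_of_notMem (by simp [hpq, hps]),
      Finset.card_insert_of_notMem (by simp [hqs]), Finset.card_singleton]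
    rfl
  have hsum3 : ∀ f : Fin 3 → ℝ, ∑ i, f i = f p + f q + f s := by
    intro f
    rw [← huniv, Finset.sum_insert (by simp [hpq, hps]),
      Finset.sum_insert (by simp [hqs]), Finset.sum_singleton]
    ring
  have hmem : ∀ i, ev i = u₁sq ∨ ev i = u₂sq ∨ ev i = u₃sq := by
    intro i
    have : i ∈ ({p, q, s} : Finset (Fin 3)) := huniv ▸ Finset.mem_univ i
    rcases Finset.mem_insert.1 this with h | h
    · left; rw [h, hp]
    rcases Finset.mem_insert.1 h with h | h
    · right; left; rw [h, hq]
    · right; right; rw [Finset.mem_singleton.1 h, hs]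
  have hub : ∀ i, ev i ≤ u₁sq := by
    intro i; rcases hmem i with h | h | h <;> rw [h] <;> linarith
  have hlb : ∀ i, u₃sq ≤ ev i := by
    intro i; rcases hmem i with h | h | h <;> rw [h] <;> linarith
  -- orthonormality of the eigenbasis as dot products
  have hvv : ∀ i j, v i ⬝ᵥ v j = if i = j then 1 else 0 := fun i j => vb_dot hSsym i j
  -- the quadratic form of `S` computes the norm² of `Rm ρ *ᵥ ·`
  have hquad : ∀ x : Fin 3 → ℝ, (Rm ρ *ᵥ x) ⬝ᵥ (Rm ρ *ᵥ x) = x ⬝ᵥ (S *ᵥ x) := by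
    intro x
    rw [hSdef, RtR_eq, ← Matrix.mulVec_mulVec, dotProduct_mulVec x, Matrix.vecMul_transpose]
  -- eigenvector quadratic form values
  have hevq : ∀ i, v i ⬝ᵥ (S *ᵥ v i) = ev i := by
    intro i
    rw [hSsym.mulVec_eigenvectorBasis i, dotProduct_smul, smul_eq_mul]
    show ev i * (v i ⬝ᵥ v i) = ev i
    rw [hvv i i, if_pos rfl, mul_one]
  have hevnn : ∀ i, 0 ≤ ev i := by
    intro i
    rw [← hevq i, ← hquad (v i)]
    exact dot_self_nonneg' _
  have hu3nn : 0 ≤ u₃sq := hs ▸ hevnn s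
  have hu2nn : 0 ≤ u₂sq := le_trans hu3nn h23
  have hu1nn : 0 ≤ u₁sq := le_trans hu2nn h12
  -- Rayleigh bound
  have hray : ∀ x : Fin 3 → ℝ, x ⬝ᵥ (S *ᵥ x) ≤ u₁sq * (x ⬝ᵥ x) := by
    intro x
    rw [quadform_eq hSsym x, parseval_dot hSsym x, Finset.mul_sum]
    exact Finset.sum_le_sum fun i _ => mul_le_mul_of_nonneg_right (hub i) (sq_nonneg _)
  -- Ky Fan bound for two orthonormal vectors
  have hkf : ∀ x y : Fin 3 → ℝ, x ⬝ᵥ x = 1 → y ⬝ᵥ y = 1 → x ⬝ᵥ y = 0 →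
      x ⬝ᵥ (S *ᵥ x) + y ⬝ᵥ (S *ᵥ y) ≤ u₁sq + u₂sq := by
    intro x y hx hy hxy
    rw [quadform_eq hSsym x, quadform_eq hSsym y, ← Finset.sum_add_distrib]
    have hterm : ∀ i, ev i * (v i ⬝ᵥ x) ^ 2 + ev i * (v i ⬝ᵥ y) ^ 2
        ≤ ev i + u₃sq * (((v i ⬝ᵥ x) ^ 2 + (v i ⬝ᵥ y) ^ 2) - 1) := by
      intro i
      have hw1 : (v i ⬝ᵥ x) ^ 2 + (v i ⬝ᵥ y) ^ 2 ≤ 1 :=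
        bessel_dot (v i) x y (by rw [hvv i i, if_pos rfl]) hx hy hxy
      nlinarith [hlb i]
    calc (∑ i, (ev i * ((⇑(hSsym.eigenvectorBasis i) : Fin 3 → ℝ) ⬝ᵥ x) ^ 2
            + ev i * ((⇑(hSsym.eigenvectorBasis i) : Fin 3 → ℝ) ⬝ᵥ y) ^ 2))
        ≤ ∑ i, (ev i + u₃sq * (((v i ⬝ᵥ x) ^ 2 + (v i ⬝ᵥ y) ^ 2) - 1)) :=
          Finset.sum_le_sum fun i _ => hterm i
      _ = (∑ i, ev i) + u₃sq * ((∑ i, ((v i ⬝ᵥ x) ^ 2 + (v i ⬝ᵥ y) ^ 2)) - 3) := by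
          rw [Finset.sum_add_distrib]
          congr 1
          rw [← Finset.mul_sum]
          congr 1
          rw [Finset.sum_sub_distrib]
          simp
      _ ≤ u₁sq + u₂sq := by
          have h1 : ∑ i, ev i = u₁sq + u₂sq + u₃sq := by rw [hsum3 ev, hp, hq, hs]
          have h2 : ∑ i, ((v i ⬝ᵥ x) ^ 2 + (v i ⬝ᵥ y) ^ 2) = 2 := by
            rw [Finset.sum_add_distrib, ← parseval_dot hSsym x, ← parseval_dot hSsym y, hx, hy]
            norm_num
          rw [h1, h2]
          nlinarith [hu3nn]
  -- the key norm bound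
  have hmain : ∀ c c' : Fin 3 → ℝ, c ⬝ᵥ c + c' ⬝ᵥ c' = 4 → c ⬝ᵥ c' = 0 →
      Real.sqrt (c ⬝ᵥ (S *ᵥ c)) + Real.sqrt (c' ⬝ᵥ (S *ᵥ c'))
        ≤ 2 * Real.sqrt (u₁sq + u₂sq) := by
    intro c c' hcc hccp
    have hc_nn := dot_self_nonneg' c
    have hc'_nn := dot_self_nonneg' c'
    have hQc_nn : 0 ≤ c ⬝ᵥ (S *ᵥ c) := by rw [← hquad]; exact dot_self_nonneg' _
    have hQc'_nn : 0 ≤ c' ⬝ᵥ (S *ᵥ c') := by rw [← hquad]; exact dot_self_nonneg' _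
    have hsqrt4 : Real.sqrt 4 = 2 := by
      rw [show (4:ℝ) = 2 ^ 2 by norm_num, Real.sqrt_sq (by norm_num)]
    have haux : ∀ w : Fin 3 → ℝ, w ⬝ᵥ w = 4 →
        Real.sqrt (w ⬝ᵥ (S *ᵥ w)) ≤ 2 * Real.sqrt (u₁sq + u₂sq) := by
      intro w hw
      have h1 : w ⬝ᵥ (S *ᵥ w) ≤ 4 * (u₁sq + u₂sq) := by
        have := hray w
        rw [hw] at this
        nlinarith [hu2nn]
      calc Real.sqrt (w ⬝ᵥ (S *ᵥ w)) ≤ Real.sqrt (4 * (u₁sq + u₂sq)) := Real.sqrt_le_sqrt h1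
        _ = 2 * Real.sqrt (u₁sq + u₂sq) := by
            rw [Real.sqrt_mul (by norm_num), hsqrt4]
    by_cases hc0 : c ⬝ᵥ c = 0
    · have hc : c = 0 := eq_zero_of_dot_self_eq_zero hc0
      have : c ⬝ᵥ (S *ᵥ c) = 0 := by rw [hc]; simp
      rw [this, Real.sqrt_zero, zero_add]
      exact haux c' (by linarith)
    by_cases hc'0 : c' ⬝ᵥ c' = 0
    · have hc : c' = 0 := eq_zero_of_dot_self_eq_zero hc'0
      have : c' ⬝ᵥ (S *ᵥ c') = 0 := by rw [hc]; simp
      rw [this, Real.sqrt_zero, add_zero]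
      exact haux c (by linarith)
    · have hcpos : 0 < c ⬝ᵥ c := lt_of_le_of_ne hc_nn (Ne.symm hc0)
      have hc'pos : 0 < c' ⬝ᵥ c' := lt_of_le_of_ne hc'_nn (Ne.symm hc'0)
      set α := Real.sqrt (c ⬝ᵥ c) with hα
      set β := Real.sqrt (c' ⬝ᵥ c') with hβ
      have hαpos : 0 < α := Real.sqrt_pos.2 hcpos
      have hβpos : 0 < β := Real.sqrt_pos.2 hc'pos
      have hα2 : α ^ 2 = c ⬝ᵥ c := Real.sq_sqrt hc_nn
      have hβ2 : β ^ 2 = c' ⬝ᵥ c' := Real.sq_sqrt hc'_nn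
      set x := α⁻¹ • c with hxdef
      set y := β⁻¹ • c' with hydef
      have hsmulquad : ∀ (t : ℝ) (w : Fin 3 → ℝ),
          (t • w) ⬝ᵥ (S *ᵥ (t • w)) = t ^ 2 * (w ⬝ᵥ (S *ᵥ w)) := by
        intro t w
        rw [Matrix.mulVec_smul, smul_dot_smul]
        ring_nf
      have hαne : α ≠ 0 := ne_of_gt hαpos
      have hβne : β ≠ 0 := ne_of_gt hβpos
      have hx1 : x ⬝ᵥ x = 1 := by
        rw [hxdef, smul_dot_smul, ← hα2, pow_two]
        field_simp
      have hy1 : y ⬝ᵥ y = 1 := by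
        rw [hydef, smul_dot_smul, ← hβ2, pow_two]
        field_simp
      have hxy0 : x ⬝ᵥ y = 0 := by
        rw [hxdef, hydef, smul_dot_smul, hccp, mul_zero]
      have hKF := hkf x y hx1 hy1 hxy0
      have hQx : x ⬝ᵥ (S *ᵥ x) = (α⁻¹) ^ 2 * (c ⬝ᵥ (S *ᵥ c)) := hsmulquad _ _
      have hQy : y ⬝ᵥ (S *ᵥ y) = (β⁻¹) ^ 2 * (c' ⬝ᵥ (S *ᵥ c')) := hsmulquad _ _
      have hx_nn : 0 ≤ x ⬝ᵥ (S *ᵥ x) := by rw [← hquad]; exact dot_self_nonneg' _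
      have hy_nn : 0 ≤ y ⬝ᵥ (S *ᵥ y) := by rw [← hquad]; exact dot_self_nonneg' _
      have hsc : Real.sqrt (c ⬝ᵥ (S *ᵥ c)) = α * Real.sqrt (x ⬝ᵥ (S *ᵥ x)) := by
        rw [hQx, Real.sqrt_mul (sq_nonneg _), Real.sqrt_sq (le_of_lt (inv_pos.2 hαpos))]
        field_simp
      have hsc' : Real.sqrt (c' ⬝ᵥ (S *ᵥ c')) = β * Real.sqrt (y ⬝ᵥ (S *ᵥ y)) := by
        rw [hQy, Real.sqrt_mul (sq_nonneg _), Real.sqrt_sq (le_of_lt (inv_pos.2 hβpos))]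
        field_simp
      rw [hsc, hsc']
      calc α * Real.sqrt (x ⬝ᵥ (S *ᵥ x)) + β * Real.sqrt (y ⬝ᵥ (S *ᵥ y))
          ≤ Real.sqrt (α ^ 2 + β ^ 2) *
            Real.sqrt (Real.sqrt (x ⬝ᵥ (S *ᵥ x)) ^ 2 + Real.sqrt (y ⬝ᵥ (S *ᵥ y)) ^ 2) :=
            cs_pair _ _ _ _ (le_of_lt hαpos) (le_of_lt hβpos) (Real.sqrt_nonneg _)
              (Real.sqrt_nonneg _)
        _ ≤ 2 * Real.sqrt (u₁sq + u₂sq) := by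
            rw [hα2, hβ2, hcc, hsqrt4, Real.sq_sqrt hx_nn, Real.sq_sqrt hy_nn]
            exact mul_le_mul_of_nonneg_left (Real.sqrt_le_sqrt hKF) (by norm_num)
  constructor
  · -- membership : the maximum is attained
    by_cases hu0 : u₁sq + u₂sq = 0
    · -- degenerate case : R = 0 on the relevant subspace
      have hu1 : u₁sq = 0 := by linarith
      refine ⟨_, ⟨![v p, v p], ![v p, v p], ?_, ?_, rfl⟩, ?_⟩
      · intro k
        fin_cases k <;>
          · show ∑ i, (v p i) ^ 2 = 1
            rw [sq_sum_eq_dot, hvv p p, if_pos rfl]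
      · intro k
        fin_cases k <;>
          · show ∑ i, (v p i) ^ 2 = 1
            rw [sq_sum_eq_dot, hvv p p, if_pos rfl]
      · rw [bell_value]
        have hRe : Rm ρ *ᵥ v p = 0 := by
          apply eq_zero_of_dot_self_eq_zero
          rw [hquad, hevq p, hp, hu1]
        have h1 : (fun j => (![v p, v p] : Fin 2 → Fin 3 → ℝ) 1 j
            + (![v p, v p] : Fin 2 → Fin 3 → ℝ) 1 j) = (2:ℝ) • v p := by
          funext j
          show v p j + v p j = 2 * v p j
          ring
        have h2 : (fun j => (![v p, v p] : Fin 2 → Fin 3 → ℝ) 1 j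
            - (![v p, v p] : Fin 2 → Fin 3 → ℝ) 1 j) = (0 : Fin 3 → ℝ) := by
          funext j
          show v p j - v p j = 0
          ring
        rw [h1, h2, Matrix.mulVec_smul, hRe, Matrix.mulVec_zero]
        simp [hu0]
    · have hspos : 0 < u₁sq + u₂sq := lt_of_le_of_ne (by linarith) (Ne.symm hu0)
      have hu1pos : 0 < u₁sq := by linarith
      set s0 := Real.sqrt (u₁sq + u₂sq) with hs0
      have hs0pos : 0 < s0 := Real.sqrt_pos.2 hspos
      have hs0sq : s0 ^ 2 = u₁sq + u₂sq := Real.sq_sqrt (le_of_lt hspos)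
      set cθ := Real.sqrt u₁sq / s0 with hcθ
      set sθ := Real.sqrt u₂sq / s0 with hsθ
      set e₁ := v p with he₁
      set e₂ := v q with he₂
      set a2 : Fin 3 → ℝ := fun i => cθ * e₁ i + sθ * e₂ i with ha2
      set a2' : Fin 3 → ℝ := fun i => cθ * e₁ i - sθ * e₂ i with ha2'
      set a1 : Fin 3 → ℝ := (Real.sqrt u₁sq)⁻¹ • (Rm ρ *ᵥ e₁) with ha1
      set a1' : Fin 3 → ℝ :=
        if u₂sq = 0 then e₁ else (Real.sqrt u₂sq)⁻¹ • (Rm ρ *ᵥ e₂) with ha1'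
      have he₁e₁ : e₁ ⬝ᵥ e₁ = 1 := by rw [he₁, hvv p p, if_pos rfl]
      have he₂e₂ : e₂ ⬝ᵥ e₂ = 1 := by rw [he₂, hvv q q, if_pos rfl]
      have he₁e₂ : e₁ ⬝ᵥ e₂ = 0 := by rw [he₁, he₂, hvv p q, if_neg hpq]
      have hRe₁ : (Rm ρ *ᵥ e₁) ⬝ᵥ (Rm ρ *ᵥ e₁) = u₁sq := by
        rw [hquad, he₁, hevq p, hp]
      have hRe₂ : (Rm ρ *ᵥ e₂) ⬝ᵥ (Rm ρ *ᵥ e₂) = u₂sq := by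
        rw [hquad, he₂, hevq q, hq]
      have hθ : cθ ^ 2 + sθ ^ 2 = 1 := by
        rw [hcθ, hsθ, div_pow, div_pow, Real.sq_sqrt hu1nn, Real.sq_sqrt hu2nn, hs0sq]
        field_simp
      have ha2dot : ∀ (ε : ℝ), (fun i => cθ * e₁ i + ε * sθ * e₂ i) ⬝ᵥ
          (fun i => cθ * e₁ i + ε * sθ * e₂ i) = cθ ^ 2 + ε ^ 2 * sθ ^ 2 := by
        intro ε
        have expand : ∀ i, (cθ * e₁ i + ε * sθ * e₂ i) * (cθ * e₁ i + ε * sθ * e₂ i)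
            = cθ ^ 2 * (e₁ i * e₁ i) + (2 * cθ * (ε * sθ)) * (e₁ i * e₂ i)
              + (ε ^ 2 * sθ ^ 2) * (e₂ i * e₂ i) := by
          intro i; ring
        show ∑ i, (cθ * e₁ i + ε * sθ * e₂ i) * (cθ * e₁ i + ε * sθ * e₂ i) = _
        rw [Finset.sum_congr rfl fun i _ => expand i]
        rw [Finset.sum_add_distrib, Finset.sum_add_distrib,
          ← Finset.mul_sum, ← Finset.mul_sum, ← Finset.mul_sum]
        have t1 : ∑ i, e₁ i * e₁ i = 1 := he₁e₁
        have t2 : ∑ i, e₁ i * e₂ i = 0 := he₁e₂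
        have t3 : ∑ i, e₂ i * e₂ i = 1 := he₂e₂
        rw [t1, t2, t3]
        ring
      have ha2unit : a2 ⬝ᵥ a2 = 1 := by
        have h := ha2dot 1
        simp only [one_mul, one_pow] at h
        rw [ha2, h]
        exact hθ
      have ha2'unit : a2' ⬝ᵥ a2' = 1 := by
        have h := ha2dot (-1)
        rw [ha2', show (fun i => cθ * e₁ i - sθ * e₂ i) = (fun i => cθ * e₁ i + (-1) * sθ * e₂ i)
          from by funext i; ring, h, neg_one_sq, one_mul]
        exact hθ
      have ha1unit : a1 ⬝ᵥ a1 = 1 := by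
        rw [ha1, smul_dot_smul, hRe₁]
        have hss : Real.sqrt u₁sq * Real.sqrt u₁sq = u₁sq := Real.mul_self_sqrt hu1nn
        have hne : Real.sqrt u₁sq ≠ 0 := ne_of_gt (Real.sqrt_pos.2 hu1pos)
        field_simp
        rw [pow_two, hss]
      have ha1'unit : a1' ⬝ᵥ a1' = 1 := by
        rw [ha1']
        by_cases h2 : u₂sq = 0
        · rw [if_pos h2]; exact he₁e₁
        · have hu2pos : 0 < u₂sq := lt_of_le_of_ne hu2nn (Ne.symm h2)
          have hss : Real.sqrt u₂sq * Real.sqrt u₂sq = u₂sq := Real.mul_self_sqrt hu2nn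
          have hne : Real.sqrt u₂sq ≠ 0 := ne_of_gt (Real.sqrt_pos.2 hu2pos)
          rw [if_neg h2, smul_dot_smul, hRe₂]
          field_simp
          rw [pow_two, hss]
      refine ⟨_, ⟨![a1, a2], ![a1', a2'], ?_, ?_, rfl⟩, ?_⟩
      · intro k
        fin_cases k
        · show ∑ i, (a1 i) ^ 2 = 1
          rw [sq_sum_eq_dot, ha1unit]
        · show ∑ i, (a2 i) ^ 2 = 1
          rw [sq_sum_eq_dot, ha2unit]
      · intro k
        fin_cases k
        · show ∑ i, (a1' i) ^ 2 = 1
          rw [sq_sum_eq_dot, ha1'unit]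
        · show ∑ i, (a2' i) ^ 2 = 1
          rw [sq_sum_eq_dot, ha2'unit]
      · rw [bell_value ρ ![a1, a2] ![a1', a2']]
        simp only [Matrix.cons_val_zero, Matrix.cons_val_one, Matrix.head_cons]
        have h1 : (fun j => a2 j + a2' j) = (2 * cθ) • e₁ := by
          funext j
          show (cθ * e₁ j + sθ * e₂ j) + (cθ * e₁ j - sθ * e₂ j) = (2 * cθ) * e₁ j
          ring
        have h2 : (fun j => a2 j - a2' j) = (2 * sθ) • e₂ := by
          funext j
          show (cθ * e₁ j + sθ * e₂ j) - (cθ * e₁ j - sθ * e₂ j) = (2 * sθ) * e₂ j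
          ring
        rw [h1, h2, Matrix.mulVec_smul, Matrix.mulVec_smul, dotProduct_smul, dotProduct_smul,
          smul_eq_mul, smul_eq_mul]
        have hterm1 : a1 ⬝ᵥ (Rm ρ *ᵥ e₁) = Real.sqrt u₁sq := by
          rw [ha1, smul_dotProduct, hRe₁, smul_eq_mul]
          have hss : Real.sqrt u₁sq * Real.sqrt u₁sq = u₁sq := Real.mul_self_sqrt hu1nn
          have hne : Real.sqrt u₁sq ≠ 0 := ne_of_gt (Real.sqrt_pos.2 hu1pos)
          field_simp
          rw [pow_two, hss]
        have hterm2 : 2 * sθ * (a1' ⬝ᵥ (Rm ρ *ᵥ e₂)) = 2 * sθ * Real.sqrt u₂sq := by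
          by_cases h2' : u₂sq = 0
          · have hsθ0 : sθ = 0 := by rw [hsθ, h2', Real.sqrt_zero, zero_div]
            rw [hsθ0, h2', Real.sqrt_zero]
            ring
          · have hv : a1' ⬝ᵥ (Rm ρ *ᵥ e₂) = Real.sqrt u₂sq := by
              rw [ha1', if_neg h2', smul_dotProduct, hRe₂, smul_eq_mul]
              have hu2pos : 0 < u₂sq := lt_of_le_of_ne hu2nn (Ne.symm h2')
              have hss : Real.sqrt u₂sq * Real.sqrt u₂sq = u₂sq := Real.mul_self_sqrt hu2nn
              have hne : Real.sqrt u₂sq ≠ 0 := ne_of_gt (Real.sqrt_pos.2 hu2pos)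
              field_simp
              rw [pow_two, hss]
            rw [hv]
        rw [hterm1, hterm2]
        have hA : Real.sqrt u₁sq * Real.sqrt u₁sq = u₁sq := Real.mul_self_sqrt hu1nn
        have hB : Real.sqrt u₂sq * Real.sqrt u₂sq = u₂sq := Real.mul_self_sqrt hu2nn
        have hS0 : s0 * s0 = u₁sq + u₂sq := Real.mul_self_sqrt (le_of_lt hspos)
        have hs0ne : s0 ≠ 0 := ne_of_gt hs0pos
        have h1' : cθ * Real.sqrt u₁sq = u₁sq / s0 := by
          rw [hcθ, div_mul_eq_mul_div, hA]
        have h2' : sθ * Real.sqrt u₂sq = u₂sq / s0 := by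
          rw [hsθ, div_mul_eq_mul_div, hB]
        have hfin : 2 * (u₁sq / s0) + 2 * (u₂sq / s0) = 2 * s0 := by
          calc 2 * (u₁sq / s0) + 2 * (u₂sq / s0) = 2 * ((u₁sq + u₂sq) / s0) := by ring
            _ = 2 * ((s0 * s0) / s0) := by rw [hS0]
            _ = 2 * s0 := by rw [mul_div_assoc, div_self hs0ne, mul_one]
        rw [mul_assoc, h1', mul_assoc, h2']
        exact hfin.symm
  · -- upper bound
    rintro x ⟨B, ⟨a, a', ha, ha', rfl⟩, rfl⟩
    rw [bell_value]
    set c : Fin 3 → ℝ := fun j => a 1 j + a' 1 j with hc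
    set c' : Fin 3 → ℝ := fun j => a 1 j - a' 1 j with hc'
    have ha0 : a 0 ⬝ᵥ a 0 = 1 := by rw [← sq_sum_eq_dot]; exact ha 0
    have ha'0 : a' 0 ⬝ᵥ a' 0 = 1 := by rw [← sq_sum_eq_dot]; exact ha' 0
    have hcc : c ⬝ᵥ c + c' ⬝ᵥ c' = 4 := by
      have e1 : c ⬝ᵥ c + c' ⬝ᵥ c' = ∑ i, (2 * (a 1 i) ^ 2 + 2 * (a' 1 i) ^ 2) := by
        rw [dotProduct, dotProduct, ← Finset.sum_add_distrib]
        refine Finset.sum_congr rfl fun i _ => ?_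
        show c i * c i + c' i * c' i = _
        rw [hc, hc']
        ring
      rw [e1, Finset.sum_add_distrib, ← Finset.mul_sum, ← Finset.mul_sum, ha 1, ha' 1]
      norm_num
    have hccp : c ⬝ᵥ c' = 0 := by
      have e1 : c ⬝ᵥ c' = ∑ i, ((a 1 i) ^ 2 - (a' 1 i) ^ 2) := by
        rw [dotProduct]
        refine Finset.sum_congr rfl fun i _ => ?_
        show c i * c' i = _
        rw [hc, hc']
        ring
      rw [e1, Finset.sum_sub_distrib, ha 1, ha' 1, sub_self]
    have t1 : a 0 ⬝ᵥ (Rm ρ *ᵥ c) ≤ Real.sqrt (c ⬝ᵥ (S *ᵥ c)) := by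
      have := cs_dot (a 0) (Rm ρ *ᵥ c) ha0
      rwa [hquad c] at this
    have t2 : a' 0 ⬝ᵥ (Rm ρ *ᵥ c') ≤ Real.sqrt (c' ⬝ᵥ (S *ᵥ c')) := by
      have := cs_dot (a' 0) (Rm ρ *ᵥ c') ha'0
      rwa [hquad c'] at this
    have hfin := hmain c c' hcc hccp
    calc a 0 ⬝ᵥ (Rm ρ *ᵥ c) + a' 0 ⬝ᵥ (Rm ρ *ᵥ c') ≤
        Real.sqrt (c ⬝ᵥ (S *ᵥ c)) + Real.sqrt (c' ⬝ᵥ (S *ᵥ c')) := add_le_add t1 t2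
      _ ≤ 2 * Real.sqrt (u₁sq + u₂sq) := hfin
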